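/- Let J and M be finite nonempty index sets and φ_j, φ'_m fPIL formulas over a finite set of ports P for each j ∈ J and m ∈ M. Then (⊎_{j∈J} φ_j) ⊗ (⊎_{m∈M} φ'_m) ≡ ~( (⊎_{j∈J} φ_j) ⊎ (⊎_{m∈M} φ'_m) ) ⊗ ( ⋁f_{(j,m)∈J×M} (φ_j ∧f φ'_m) ) as fPCL formulas. -/
import Mathlib


/-- A De Morgan algebra: a bounded distributive lattice equipped with a
complement map satisfying involution and the De Morgan laws. -/
class DeMorganAlg (K : Type) extends DistribLattice K, BoundedOrder K where
  compl : K → K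
  compl_compl : ∀ k : K, compl (compl k) = k
  compl_sup : ∀ k k' : K, compl (k ⊔ k') = compl k ⊓ compl k'
  compl_inf : ∀ k k' : K, compl (k ⊓ k') = compl k ⊔ compl k'

/-- fPIL formulas over the set of ports `P`. -/
inductive fPIL (P : Type) : Type where
  | tt : fPIL P
  | port : P → fPIL P
  | fnot : fPIL P → fPIL P
  | fdisj : fPIL P → fPIL P → fPIL P

/-- Fuzzy conjunction of fPIL formulas. -/
def fPIL.fconj {P : Type} (φ₁ φ₂ : fPIL P) : fPIL P :=
  .fnot (.fdisj (.fnot φ₁) (.fnot φ₂))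

/-- The fPIL formula `false`. -/
def fPIL.ff {P : Type} : fPIL P := .fnot .tt

/-- K-fuzzy interactions on `P`: maps `a : P → K` with `a p ≠ 0` for some port `p`. -/
def fI (P K : Type) [DeMorganAlg K] : Type := {a : P → K // ∃ p : P, a p ≠ ⊥}

/-- Semantics of fPIL formulas. -/
def fPIL.sem {P K : Type} [DeMorganAlg K] : fPIL P → fI P K → K
  | .tt, _ => ⊤
  | .port p, a => a.1 p
  | .fnot φ, a => DeMorganAlg.compl (φ.sem a)
  | .fdisj φ₁ φ₂, a => φ₁.sem a ⊔ φ₂.sem a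

/-- Equivalence of fPIL formulas: equal semantics over every De Morgan algebra
and every fuzzy interaction. -/
def pilEquiv {P : Type} (φ₁ φ₂ : fPIL P) : Prop :=
  ∀ (K : Type) [DeMorganAlg K] (a : fI P K), φ₁.sem a = φ₂.sem a
noncomputable instance {P K : Type} [DeMorganAlg K] : DecidableEq (fI P K) :=
  Classical.decEq _

/-- fPCL formulas over the set of ports `P`. -/
inductive fPCL (P : Type) : Type where
  | pil : fPIL P → fPCL P
  | cneg : fPCL P → fPCL P
  | oplus : fPCL P → fPCL P → fPCL P
  | coal : fPCL P → fPCL P → fPCL P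

/-- Fuzzy conjunction `⊗` of fPCL formulas. -/
def fPCL.otimes {P : Type} (ζ₁ ζ₂ : fPCL P) : fPCL P :=
  .cneg (.oplus (.cneg ζ₁) (.cneg ζ₂))

/-- The closure operator `~ζ := ζ ⊎ true`. -/
def fPCL.closure {P : Type} (ζ : fPCL P) : fPCL P := .coal ζ (.pil .tt)

/-- Semantics of fPCL formulas on finite sets of fuzzy interactions. -/
noncomputable def fPCL.sem {P K : Type} [DeMorganAlg K] :
    fPCL P → Finset (fI P K) → K
  | .pil φ, γ => γ.inf fun a => φ.sem a
  | .cneg ζ, γ => DeMorganAlg.compl (ζ.sem γ)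
  | .oplus ζ₁ ζ₂, γ => ζ₁.sem γ ⊔ ζ₂.sem γ
  | .coal ζ₁ ζ₂, γ =>
      ((γ.powerset ×ˢ γ.powerset).filter fun q =>
          q.1.Nonempty ∧ q.2.Nonempty ∧ q.1 ∪ q.2 = γ).sup fun q =>
        ζ₁.sem q.1 ⊓ ζ₂.sem q.2

/-- Equivalence of fPCL formulas: equal semantics over every De Morgan algebra
and every nonempty finite set of fuzzy interactions. -/
def pclEquiv {P : Type} (ζ₁ ζ₂ : fPCL P) : Prop :=
  ∀ (K : Type) [DeMorganAlg K] (γ : Finset (fI P K)), γ.Nonempty →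
    ζ₁.sem γ = ζ₂.sem γ
/-- Iterated fuzzy disjunction `⋁f_{j∈Fin (n+1)} φ j` of fPIL formulas over the
finite nonempty index set `Fin (n+1)`. -/
def fPIL.bigDisj {P : Type} : (n : ℕ) → (Fin (n + 1) → fPIL P) → fPIL P
  | 0, φ => φ 0
  | n + 1, φ => .fdisj (fPIL.bigDisj n fun i => φ i.castSucc) (φ (Fin.last (n + 1)))

/-- Iterated fuzzy conjunction `⋀f_{j∈Fin (n+1)} φ j` of fPIL formulas. -/
def fPIL.bigConj {P : Type} : (n : ℕ) → (Fin (n + 1) → fPIL P) → fPIL P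
  | 0, φ => φ 0
  | n + 1, φ => fPIL.fconj (fPIL.bigConj n fun i => φ i.castSucc) (φ (Fin.last (n + 1)))

/-- Iterated coalescing `⊎_{j∈Fin (n+1)} ζ j` of fPCL formulas. -/
def fPCL.bigCoal {P : Type} : (n : ℕ) → (Fin (n + 1) → fPCL P) → fPCL P
  | 0, ζ => ζ 0
  | n + 1, ζ => .coal (fPCL.bigCoal n fun i => ζ i.castSucc) (ζ (Fin.last (n + 1)))

/-- Iterated fuzzy conjunction `⊗_{j∈Fin (n+1)} ζ j` of fPCL formulas. -/
def fPCL.bigOtimes {P : Type} : (n : ℕ) → (Fin (n + 1) → fPCL P) → fPCL P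
  | 0, ζ => ζ 0
  | n + 1, ζ => (fPCL.bigOtimes n fun i => ζ i.castSucc).otimes (ζ (Fin.last (n + 1)))

/-- Iterated fuzzy disjunction `⊕_{j∈Fin (n+1)} ζ j` of fPCL formulas. -/
def fPCL.bigOplus {P : Type} : (n : ℕ) → (Fin (n + 1) → fPCL P) → fPCL P
  | 0, ζ => ζ 0
  | n + 1, ζ => .oplus (fPCL.bigOplus n fun i => ζ i.castSucc) (ζ (Fin.last (n + 1)))

section Aux

variable {P K : Type} [DeMorganAlg K]

lemma fconj_sem (φ₁ φ₂ : fPIL P) (a : fI P K) :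
    (fPIL.fconj φ₁ φ₂).sem a = φ₁.sem a ⊓ φ₂.sem a := by
  simp [fPIL.fconj, fPIL.sem, DeMorganAlg.compl_sup, DeMorganAlg.compl_compl]

lemma otimes_sem (ζ₁ ζ₂ : fPCL P) (γ : Finset (fI P K)) :
    (fPCL.otimes ζ₁ ζ₂).sem γ = ζ₁.sem γ ⊓ ζ₂.sem γ := by
  simp [fPCL.otimes, fPCL.sem, DeMorganAlg.compl_sup, DeMorganAlg.compl_compl]

lemma sup_univ_last {n : ℕ} (f : Fin (n + 1) → K) :
    (Finset.univ.sup f) =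
      (Finset.univ.sup fun i : Fin n => f i.castSucc) ⊔ f (Fin.last n) := by
  apply le_antisymm
  · apply Finset.sup_le
    intro j _
    rcases Fin.eq_castSucc_or_eq_last j with ⟨i, rfl⟩ | rfl
    · exact le_sup_of_le_left (Finset.le_sup (f := fun i : Fin _ => f i.castSucc) (Finset.mem_univ i))
    · exact le_sup_right
  · apply sup_le
    · exact Finset.sup_le fun i _ => Finset.le_sup (f := f) (Finset.mem_univ i.castSucc)
    · exact Finset.le_sup (f := f) (Finset.mem_univ _)

lemma bigDisj_sem : ∀ (m : ℕ) (ψ : Fin (m + 1) → fPIL P) (a : fI P K),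
    (fPIL.bigDisj m ψ).sem a = Finset.univ.sup fun j => (ψ j).sem a
  | 0, ψ, a => by
    show (ψ 0).sem a = _
    apply le_antisymm
    · exact Finset.le_sup (f := fun j => (ψ j).sem a) (Finset.mem_univ 0)
    · exact Finset.sup_le fun j _ => by rw [Fin.eq_zero j]
  | m + 1, ψ, a => by
    show ((fPIL.bigDisj m fun i => ψ i.castSucc).sem a) ⊔ (ψ (Fin.last (m+1))).sem a = _
    rw [bigDisj_sem m, sup_univ_last fun j => (ψ j).sem a]

/-- Lower bound for a coalescing semantics from one admissible decomposition. -/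
lemma coal_le {ζ₁ ζ₂ : fPCL P} {γ γ₁ γ₂ : Finset (fI P K)} (h1 : γ₁.Nonempty)
    (h2 : γ₂.Nonempty) (hu : γ₁ ∪ γ₂ = γ) :
    ζ₁.sem γ₁ ⊓ ζ₂.sem γ₂ ≤ (fPCL.coal ζ₁ ζ₂).sem γ := by
  have hmem : (γ₁, γ₂) ∈ (γ.powerset ×ˢ γ.powerset).filter
      fun q : Finset (fI P K) × Finset (fI P K) =>
        q.1.Nonempty ∧ q.2.Nonempty ∧ q.1 ∪ q.2 = γ :=
    Finset.mem_filter.mpr ⟨Finset.mem_product.mpr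
      ⟨Finset.mem_powerset.mpr (hu ▸ Finset.subset_union_left),
       Finset.mem_powerset.mpr (hu ▸ Finset.subset_union_right)⟩, h1, h2, hu⟩
  exact Finset.le_sup
    (f := fun q : Finset (fI P K) × Finset (fI P K) => ζ₁.sem q.1 ⊓ ζ₂.sem q.2) hmem

/-- Pointwise upper bound on the semantics of a coalescing of `fPIL` formulas. -/
lemma bigCoal_le_sup : ∀ (m : ℕ) (φ : Fin (m + 1) → fPIL P)
    (δ : Finset (fI P K)) (a : fI P K), a ∈ δ →
    (fPCL.bigCoal m fun j => .pil (φ j)).sem δ ≤ Finset.univ.sup fun j => (φ j).sem a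
  | 0, φ, δ, a, ha => by
    show δ.inf (φ 0).sem ≤ _
    exact le_trans (Finset.inf_le ha)
      (Finset.le_sup (f := fun j => (φ j).sem a) (Finset.mem_univ 0))
  | m + 1, φ, δ, a, ha => by
    show ((_ : Finset _).sup _ : K) ≤ _
    apply Finset.sup_le
    rintro q hq
    obtain ⟨-, h1, h2, hu⟩ := Finset.mem_filter.mp hq
    rcases Finset.mem_union.mp (hu ▸ ha) with hm | hm
    · refine le_trans inf_le_left ?_
      refine le_trans (bigCoal_le_sup m (fun i => φ i.castSucc) q.1 a hm) ?_
      exact Finset.sup_le fun j _ =>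
        Finset.le_sup (f := fun j => (φ j).sem a) (Finset.mem_univ j.castSucc)
    · refine le_trans inf_le_right (le_trans (Finset.inf_le hm) ?_)
      exact Finset.le_sup (f := fun j => (φ j).sem a) (Finset.mem_univ (Fin.last (m + 1)))

/-- Binary distributivity of a finite infimum of joins as a sup over subsets. -/
lemma inf_sup_le_powerset_sup {ι : Type} [DecidableEq ι] (γ : Finset ι)
    (x y : ι → K) :
    (γ.inf fun a => x a ⊔ y a) ≤
      γ.powerset.sup fun S => S.inf x ⊓ (γ \ S).inf y := by
  induction γ using Finset.induction_on with
  | empty => simpa using Finset.le_sup (f := fun S : Finset ι => S.inf x ⊓ ((∅ : Finset ι) \ S).inf y) (Finset.mem_powerset.mpr (Finset.Subset.refl ∅))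
  | @insert a s ha ih =>
    rw [Finset.inf_insert]
    refine le_trans (inf_le_inf_left _ ih) ?_
    rw [Finset.sup_inf_distrib_left]
    apply Finset.sup_le
    intro S hS
    have hSs : S ⊆ s := Finset.mem_powerset.mp hS
    have haS : a ∉ S := fun h => ha (hSs h)
    rw [inf_sup_right]
    apply sup_le
    · have hd : insert a s \ insert a S = s \ S := by
        ext b
        simp only [Finset.mem_sdiff, Finset.mem_insert, not_or]
        constructor
        · rintro ⟨hb1 | hb1, hb2, hb3⟩
          · exact absurd hb1 hb2
          · exact ⟨hb1, hb3⟩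
        · rintro ⟨hb1, hb2⟩
          exact ⟨Or.inr hb1, fun h => ha (h ▸ hb1), hb2⟩
      refine le_trans ?_ (Finset.le_sup (b := insert a S)
        (Finset.mem_powerset.mpr (Finset.insert_subset_insert a hSs)))
      rw [hd, Finset.inf_insert, inf_assoc]
    · refine le_trans ?_ (Finset.le_sup (b := S)
        (Finset.mem_powerset.mpr (hSs.trans (Finset.subset_insert a s))))
      rw [Finset.insert_sdiff_of_notMem s haS, Finset.inf_insert, inf_left_comm]

/-- Key extension lemma. -/
lemma bigCoal_extend : ∀ (m : ℕ) (φ : Fin (m + 1) → fPIL P)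
    (δ σ : Finset (fI P K)), δ.Nonempty →
    (fPCL.bigCoal m fun j => .pil (φ j)).sem δ ⊓
        (σ.inf fun a => Finset.univ.sup fun j => (φ j).sem a) ≤
      (fPCL.bigCoal m fun j => .pil (φ j)).sem (δ ∪ σ)
  | 0, φ, δ, σ, _ => by
    show δ.inf (φ 0).sem ⊓ _ ≤ (δ ∪ σ).inf (φ 0).sem
    rw [Finset.inf_union]
    refine inf_le_inf_left _ (Finset.inf_mono_fun fun a _ => ?_)
    exact Finset.sup_le fun j _ => by rw [Fin.eq_zero j]
  | m + 1, φ, δ, σ, hδ => by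
    show ((_ : Finset _).sup _ : K) ⊓ _ ≤ (fPCL.coal _ _).sem _
    rw [Finset.sup_inf_distrib_right]
    apply Finset.sup_le
    rintro q hq
    obtain ⟨-, h1, h2, hu⟩ := Finset.mem_filter.mp hq
    have hE : (σ.inf fun a => Finset.univ.sup fun j => (φ j).sem a) ≤
        σ.inf fun a => (Finset.univ.sup fun i : Fin (m + 1) => (φ i.castSucc).sem a)
          ⊔ (φ (Fin.last (m + 1))).sem a := by
      refine Finset.inf_mono_fun fun a _ => ?_
      rw [sup_univ_last fun j => (φ j).sem a]
    refine le_trans (inf_le_inf_left _ (hE.trans (inf_sup_le_powerset_sup σ _ _))) ?_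
    rw [Finset.sup_inf_distrib_left]
    apply Finset.sup_le
    intro S hS
    have hSσ : S ⊆ σ := Finset.mem_powerset.mp hS
    rw [inf_inf_inf_comm]
    have hB : (fPCL.pil (φ (Fin.last (m + 1))) : fPCL P).sem q.2 ⊓ (σ \ S).inf
        (φ (Fin.last (m + 1))).sem =
        (fPCL.pil (φ (Fin.last (m + 1))) : fPCL P).sem (q.2 ∪ (σ \ S)) :=
      (Finset.inf_union (f := (φ (Fin.last (m + 1))).sem)).symm
    refine le_trans (inf_le_inf
      (bigCoal_extend m (fun i => φ i.castSucc) q.1 S h1) (le_of_eq hB)) ?_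
    have hun : (q.1 ∪ S) ∪ (q.2 ∪ (σ \ S)) = δ ∪ σ := by
      rw [show (q.1 ∪ S) ∪ (q.2 ∪ (σ \ S)) = (q.1 ∪ q.2) ∪ (S ∪ (σ \ S)) from
        sup_sup_sup_comm q.1 S q.2 (σ \ S), hu, Finset.union_sdiff_of_subset hSσ]
    exact coal_le (ζ₁ := fPCL.bigCoal m fun i => .pil (φ i.castSucc))
      (h1.mono Finset.subset_union_left) (h2.mono Finset.subset_union_left) hun

end Aux
/-- for finite nonempty index sets `J = Fin (m+1)`, `M = Fin (n+1)`
and fPIL formulas `φ j`, `φ' k`,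
`(⊎_{j∈J} φ_j) ⊗ (⊎_{m∈M} φ'_m) ≡
   ~((⊎_{j∈J} φ_j) ⊎ (⊎_{m∈M} φ'_m)) ⊗ (⋁f_{(j,m)∈J×M} (φ_j ∧f φ'_m))`
as fPCL formulas (the iterated disjunction over `J×M` being taken by iterating
over `J` and then over `M`). -/

theorem fpcl_bigCoal_otimes {P : Type} [Fintype P] (m n : ℕ)
    (φ : Fin (m + 1) → fPIL P) (φ' : Fin (n + 1) → fPIL P) :
    pclEquiv
      ((fPCL.bigCoal m fun j => .pil (φ j)).otimes
        (fPCL.bigCoal n fun k => .pil (φ' k)))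
      ((fPCL.closure (.coal (fPCL.bigCoal m fun j => .pil (φ j))
          (fPCL.bigCoal n fun k => .pil (φ' k)))).otimes
        (.pil (fPIL.bigDisj m fun j =>
          fPIL.bigDisj n fun k => fPIL.fconj (φ j) (φ' k)))) := by
  intro K _ γ hγ
  set ζA : fPCL P := fPCL.bigCoal m fun j => .pil (φ j) with hζA
  set ζB : fPCL P := fPCL.bigCoal n fun k => .pil (φ' k) with hζB
  rw [otimes_sem, otimes_sem]
  have hDsem : (fPCL.pil (fPIL.bigDisj m fun j =>
      fPIL.bigDisj n fun k => fPIL.fconj (φ j) (φ' k))).sem γ =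
      γ.inf fun a => Finset.univ.sup fun j => Finset.univ.sup fun k =>
        (φ j).sem a ⊓ (φ' k).sem a := by
    show γ.inf _ = _
    refine Finset.inf_congr rfl fun a _ => ?_
    rw [bigDisj_sem]
    refine Finset.sup_congr rfl fun j _ => ?_
    rw [bigDisj_sem]
    exact Finset.sup_congr rfl fun k _ => fconj_sem _ _ _
  rw [hDsem]
  have httop : (fPCL.pil (fPIL.tt : fPIL P)).sem γ = (⊤ : K) := by
    show γ.inf _ = ⊤
    simp [fPIL.sem]
  have hD1 : (γ.inf fun a => Finset.univ.sup fun j => Finset.univ.sup fun k =>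
        (φ j).sem a ⊓ (φ' k).sem a) ≤
      γ.inf fun a => Finset.univ.sup fun j => (φ j).sem a :=
    Finset.inf_mono_fun fun a _ => Finset.sup_le fun j _ => Finset.sup_le fun k _ =>
      le_trans inf_le_left (Finset.le_sup (f := fun j => (φ j).sem a) (Finset.mem_univ j))
  have hD2 : (γ.inf fun a => Finset.univ.sup fun j => Finset.univ.sup fun k =>
        (φ j).sem a ⊓ (φ' k).sem a) ≤
      γ.inf fun a => Finset.univ.sup fun k => (φ' k).sem a :=
    Finset.inf_mono_fun fun a _ => Finset.sup_le fun j _ => Finset.sup_le fun k _ =>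
      le_trans inf_le_right (Finset.le_sup (f := fun k => (φ' k).sem a) (Finset.mem_univ k))
  apply le_antisymm
  · -- LHS ≤ RHS
    apply le_inf
    · refine le_trans (le_inf (coal_le hγ hγ (Finset.union_self γ)) le_top) ?_
      rw [← httop]
      exact coal_le hγ hγ (Finset.union_self γ)
    · refine Finset.le_inf fun a ha => ?_
      refine le_trans (inf_le_inf (bigCoal_le_sup m φ γ a ha)
        (bigCoal_le_sup n φ' γ a ha)) ?_
      rw [Finset.sup_inf_sup, Finset.sup_product_left]
  · -- RHS ≤ LHS
    apply le_inf
    · -- ≤ ζA.sem γ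
      show ((fPCL.coal (fPCL.coal ζA ζB) (fPCL.pil .tt)).sem γ) ⊓ _ ≤ _
      rw [show (fPCL.coal (fPCL.coal ζA ζB) (fPCL.pil .tt)).sem γ =
        ((γ.powerset ×ˢ γ.powerset).filter fun q : Finset (fI P K) × Finset (fI P K) =>
          q.1.Nonempty ∧ q.2.Nonempty ∧ q.1 ∪ q.2 = γ).sup (fun q =>
          (fPCL.coal ζA ζB).sem q.1 ⊓ (fPCL.pil .tt).sem q.2) from rfl]
      rw [Finset.sup_inf_distrib_right]
      apply Finset.sup_le
      rintro q hq
      obtain ⟨hp, h1, -, -⟩ := Finset.mem_filter.mp hq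
      have hq1γ : q.1 ⊆ γ := Finset.mem_powerset.mp (Finset.mem_product.mp hp).1
      refine le_trans (inf_le_inf_right _ inf_le_left) ?_
      rw [show (fPCL.coal ζA ζB).sem q.1 =
        ((q.1.powerset ×ˢ q.1.powerset).filter fun r : Finset (fI P K) × Finset (fI P K) =>
          r.1.Nonempty ∧ r.2.Nonempty ∧ r.1 ∪ r.2 = q.1).sup (fun r =>
          ζA.sem r.1 ⊓ ζB.sem r.2) from rfl]
      rw [Finset.sup_inf_distrib_right]
      apply Finset.sup_le
      rintro r hr
      obtain ⟨hp', hr1, -, -⟩ := Finset.mem_filter.mp hr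
      have hr1γ : r.1 ⊆ γ :=
        (Finset.mem_powerset.mp (Finset.mem_product.mp hp').1).trans hq1γ
      refine le_trans (inf_le_inf inf_le_left hD1) ?_
      refine le_trans (bigCoal_extend m φ r.1 γ hr1) ?_
      rw [Finset.union_eq_right.mpr hr1γ]
    · -- ≤ ζB.sem γ
      show ((fPCL.coal (fPCL.coal ζA ζB) (fPCL.pil .tt)).sem γ) ⊓ _ ≤ _
      rw [show (fPCL.coal (fPCL.coal ζA ζB) (fPCL.pil .tt)).sem γ =
        ((γ.powerset ×ˢ γ.powerset).filter fun q : Finset (fI P K) × Finset (fI P K) =>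
          q.1.Nonempty ∧ q.2.Nonempty ∧ q.1 ∪ q.2 = γ).sup (fun q =>
          (fPCL.coal ζA ζB).sem q.1 ⊓ (fPCL.pil .tt).sem q.2) from rfl]
      rw [Finset.sup_inf_distrib_right]
      apply Finset.sup_le
      rintro q hq
      obtain ⟨hp, h1, -, -⟩ := Finset.mem_filter.mp hq
      have hq1γ : q.1 ⊆ γ := Finset.mem_powerset.mp (Finset.mem_product.mp hp).1
      refine le_trans (inf_le_inf_right _ inf_le_left) ?_
      rw [show (fPCL.coal ζA ζB).sem q.1 =
        ((q.1.powerset ×ˢ q.1.powerset).filter fun r : Finset (fI P K) × Finset (fI P K) =>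
          r.1.Nonempty ∧ r.2.Nonempty ∧ r.1 ∪ r.2 = q.1).sup (fun r =>
          ζA.sem r.1 ⊓ ζB.sem r.2) from rfl]
      rw [Finset.sup_inf_distrib_right]
      apply Finset.sup_le
      rintro r hr
      obtain ⟨hp', -, hr2, -⟩ := Finset.mem_filter.mp hr
      have hr2γ : r.2 ⊆ γ :=
        (Finset.mem_powerset.mp (Finset.mem_product.mp hp').2).trans hq1γ
      refine le_trans (inf_le_inf inf_le_right hD2) ?_
      refine le_trans (bigCoal_extend n φ' r.2 γ hr2) ?_
      rw [Finset.union_eq_right.mpr hr2γ]
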